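/- Let 1 → H → G → Q → 1 be an extension of groups with outer action Φ : Q → Out(H), and suppose: (1) H is solvable; (2) H is a characteristic subgroup of G; (3) the normalizer N_{Out(H)}(Φ(Q)) of Φ(Q) in Out(H) is solvable; (4) Aut(ker Φ) is solvable. Then Aut(G) is solvable. -/

import Mathlib

/-- The group of inner automorphisms is normal in the automorphism group. -/
instance OutNormal (H : Type*) [Group H] : ((MulAut.conj : H →* MulAut H).range).Normal := by
  constructor
  intro n hn g
  obtain ⟨h, rfl⟩ := hn
  refine ⟨g h, ?_⟩
  ext x
  simp [MulAut.conj, mul_assoc]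

/-- The outer automorphism group `Out H = Aut H / Inn H`. -/
def OutGroup (H : Type*) [Group H] :=
  MulAut H ⧸ (MulAut.conj : H →* MulAut H).range

instance (H : Type*) [Group H] : Group (OutGroup H) :=
  QuotientGroup.Quotient.group _

/-- The projection `Aut H → Out H`, `α ↦ [α]`. -/
def toOut (H : Type*) [Group H] : MulAut H →* OutGroup H :=
  QuotientGroup.mk' _

namespace Stmt17Aux

/-- If an automorphism is trivial on a normal subgroup `K` and on the quotient,
then two such automorphisms commute. -/
theorem comm_aux {X : Type*} [Group X] (K : Subgroup X) (hK : K.Normal)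
    (β₁ β₂ : X ≃* X)
    (m1 : ∀ x : X, x⁻¹ * β₁ x ∈ K) (m2 : ∀ x : X, x⁻¹ * β₂ x ∈ K)
    (f1 : ∀ k ∈ K, β₁ k = k) (f2 : ∀ k ∈ K, β₂ k = k)
    (x : X) : β₁ (β₂ x) = β₂ (β₁ x) := by
  have cen : ∀ (β : X ≃* X), (∀ x : X, x⁻¹ * β x ∈ K) → (∀ k ∈ K, β k = k) →
      ∀ x : X, ∀ k ∈ K, (x⁻¹ * β x) * k = k * (x⁻¹ * β x) := by
    intro β hm hf x k hk
    have h1 : x * k * x⁻¹ ∈ K := hK.conj_mem k hk x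
    have h3 : β x * k * (β x)⁻¹ = x * k * x⁻¹ := by
      have h2 := hf _ h1
      rwa [map_mul, map_mul, map_inv, hf k hk] at h2
    have h4 : (x⁻¹ * β x) * k * (x⁻¹ * β x)⁻¹ = k := by
      have h5 : (x⁻¹ * β x) * k * (x⁻¹ * β x)⁻¹ = x⁻¹ * (β x * k * (β x)⁻¹) * x := by
        group
      rw [h5, h3]; group
    calc (x⁻¹ * β x) * k = ((x⁻¹ * β x) * k * (x⁻¹ * β x)⁻¹) * (x⁻¹ * β x) := by group
    _ = k * (x⁻¹ * β x) := by rw [h4]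
  have e1 : β₁ (β₂ x) = x * (x⁻¹ * β₁ x) * (x⁻¹ * β₂ x) := by
    have h : β₂ x = x * (x⁻¹ * β₂ x) := by group
    rw [h, map_mul, f1 _ (m2 x)]
    group
  have e2 : β₂ (β₁ x) = x * (x⁻¹ * β₂ x) * (x⁻¹ * β₁ x) := by
    have h : β₁ x = x * (x⁻¹ * β₁ x) := by group
    rw [h, map_mul, f2 _ (m1 x)]
    group
  rw [e1, e2, mul_assoc x (x⁻¹ * β₁ x), mul_assoc x (x⁻¹ * β₂ x),
    cen β₁ m1 f1 x _ (m2 x)]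

variable {G Q : Type*} [Group G] [Group Q] (π : G →* Q)

theorem ker_apply_mem (h2 : π.ker.Characteristic) (α : MulAut G) {g : G}
    (hg : g ∈ π.ker) : α g ∈ π.ker := by
  have h := Subgroup.characteristic_iff_map_eq.mp h2 α
  rw [← h]
  exact ⟨g, hg, rfl⟩

/-- Restriction of an automorphism to the characteristic subgroup `ker π`. -/
def rAux (h2 : π.ker.Characteristic) (α : MulAut G) : MulAut ↥π.ker :=
  (MulEquiv.subgroupMap (α : G ≃* G) π.ker).trans
    (MulEquiv.subgroupCongr (Subgroup.characteristic_iff_map_eq.mp h2 α))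

@[simp] theorem rAux_apply (h2 : π.ker.Characteristic) (α : MulAut G) (h : ↥π.ker) :
    ((rAux π h2 α h : ↥π.ker) : G) = α h := rfl

/-- Restriction as a homomorphism `Aut G →* Aut (ker π)`. -/
def rHom (h2 : π.ker.Characteristic) : MulAut G →* MulAut ↥π.ker :=
  MonoidHom.mk' (rAux π h2) (by
    intro α β
    apply MulEquiv.ext
    intro h
    apply Subtype.ext
    rfl)

@[simp] theorem rHom_apply (h2 : π.ker.Characteristic) (α : MulAut G) (h : ↥π.ker) :
    ((rHom π h2 α h : ↥π.ker) : G) = α h := rfl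

theorem sSpec (hπ : Function.Surjective π) (h2 : π.ker.Characteristic) (α : MulAut G)
    (g : G) : π (α (Function.surjInv hπ (π g))) = π (α g) := by
  set g' := Function.surjInv hπ (π g) with hg'
  have h : π g' = π g := Function.surjInv_eq hπ (π g)
  have hk : g⁻¹ * g' ∈ π.ker := by
    rw [MonoidHom.mem_ker, map_mul, map_inv, h, inv_mul_cancel]
  have h5 : π (α (g⁻¹ * g')) = 1 := ker_apply_mem π h2 α hk
  have h6 : α g' = α g * α (g⁻¹ * g') := by
    rw [← map_mul]; congr 1; group
  rw [h6, map_mul, h5, mul_one]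

/-- Induced automorphism on `Q`. -/
noncomputable def sAux (hπ : Function.Surjective π) (h2 : π.ker.Characteristic)
    (α : MulAut G) : MulAut Q where
  toFun q := π (α (Function.surjInv hπ q))
  invFun q := π (α⁻¹ (Function.surjInv hπ q))
  left_inv q := by
    obtain ⟨g, rfl⟩ := hπ q
    show π (α⁻¹ (Function.surjInv hπ (π (α (Function.surjInv hπ (π g)))))) = π g
    rw [sSpec π hπ h2 α g, sSpec π hπ h2 α⁻¹ (α g), MulAut.inv_apply_self]
  right_inv q := by
    obtain ⟨g, rfl⟩ := hπ q
    show π (α (Function.surjInv hπ (π (α⁻¹ (Function.surjInv hπ (π g)))))) = π g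
    rw [sSpec π hπ h2 α⁻¹ g, sSpec π hπ h2 α (α⁻¹ g), MulAut.apply_inv_self]
  map_mul' q₁ q₂ := by
    obtain ⟨g₁, rfl⟩ := hπ q₁
    obtain ⟨g₂, rfl⟩ := hπ q₂
    show π (α (Function.surjInv hπ (π g₁ * π g₂))) =
      π (α (Function.surjInv hπ (π g₁))) * π (α (Function.surjInv hπ (π g₂)))
    rw [← map_mul π g₁ g₂, sSpec π hπ h2 α, sSpec π hπ h2 α, sSpec π hπ h2 α,
      map_mul, map_mul]

theorem sAux_apply (hπ : Function.Surjective π) (h2 : π.ker.Characteristic)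
    (α : MulAut G) (g : G) : sAux π hπ h2 α (π g) = π (α g) :=
  sSpec π hπ h2 α g

/-- The induced map `Aut G →* Aut Q`. -/
noncomputable def sHom (hπ : Function.Surjective π) (h2 : π.ker.Characteristic) :
    MulAut G →* MulAut Q :=
  MonoidHom.mk' (sAux π hπ h2) (by
    intro α β
    apply MulEquiv.ext
    intro q
    obtain ⟨g, rfl⟩ := hπ q
    show sAux π hπ h2 (α * β) (π g) = sAux π hπ h2 α (sAux π hπ h2 β (π g))
    rw [sAux_apply, sAux_apply, sAux_apply]
    rfl)

theorem sHom_apply (hπ : Function.Surjective π) (h2 : π.ker.Characteristic)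
    (α : MulAut G) (g : G) : sHom π hπ h2 α (π g) = π (α g) :=
  sSpec π hπ h2 α g





variable (hπ : Function.Surjective π) (h2 : π.ker.Characteristic)
  (Φ : Q →* OutGroup ↥π.ker)
  (hΦ : ∀ g : G, Φ (π g) = toOut ↥π.ker (MulAut.conjNormal g))

include hπ h2 hΦ

omit hπ hΦ in
theorem conjNormal_eq (α : MulAut G) (g : G) :
    (MulAut.conjNormal (α g) : MulAut ↥π.ker)
      = rHom π h2 α * MulAut.conjNormal g * (rHom π h2 α)⁻¹ := by
  apply MulEquiv.ext
  intro h
  apply Subtype.ext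
  rw [← map_inv (rHom π h2) α]
  show (↑(MulAut.conjNormal (α g) h) : G)
      = ↑(rHom π h2 α (MulAut.conjNormal g (rHom π h2 α⁻¹ h)))
  rw [MulAut.conjNormal_apply, rHom_apply]
  have h1 : ((MulAut.conjNormal g (rHom π h2 α⁻¹ h) : ↥π.ker) : G)
      = g * (α⁻¹ h) * g⁻¹ := by
    rw [MulAut.conjNormal_apply, rHom_apply]
  rw [h1, map_mul, map_mul, map_inv, MulAut.apply_inv_self]

theorem starAux (α : MulAut G) (q : Q) :
    Φ (sHom π hπ h2 α q)
      = toOut ↥π.ker (rHom π h2 α) * Φ q * (toOut ↥π.ker (rHom π h2 α))⁻¹ := by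
  obtain ⟨g, rfl⟩ := hπ q
  rw [sHom_apply, hΦ, hΦ, ← map_inv, ← map_mul, ← map_mul, conjNormal_eq π h2 α g]

theorem memN (α : MulAut G) :
    toOut ↥π.ker (rHom π h2 α) ∈ Subgroup.normalizer (Φ.range : Set (OutGroup ↥π.ker)) := by
  rw [Subgroup.mem_normalizer_iff]
  intro y
  constructor
  · rintro ⟨q, rfl⟩
    exact ⟨sHom π hπ h2 α q, starAux π hπ h2 Φ hΦ α q⟩
  · rintro ⟨q, hq⟩
    refine ⟨sHom π hπ h2 α⁻¹ q, ?_⟩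
    rw [starAux π hπ h2 Φ hΦ α⁻¹ q, hq, map_inv (rHom π h2) α,
      map_inv (toOut ↥π.ker)]
    group

theorem sKerMem (α : MulAut G) (q : Q) (hq : q ∈ Φ.ker) :
    sHom π hπ h2 α q ∈ Φ.ker := by
  rw [MonoidHom.mem_ker] at hq ⊢
  rw [starAux π hπ h2 Φ hΦ α q, hq]
  group

theorem sMapKer (α : MulAut G) :
    Subgroup.map ((sHom π hπ h2 α : Q ≃* Q) : Q →* Q) Φ.ker = Φ.ker := by
  apply le_antisymm
  · rintro _ ⟨k, hk, rfl⟩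
    exact sKerMem π hπ h2 Φ hΦ α k hk
  · intro k hk
    refine ⟨(sHom π hπ h2 α)⁻¹ k, ?_, ?_⟩
    · have h := sKerMem π hπ h2 Φ hΦ α⁻¹ k hk
      rwa [map_inv (sHom π hπ h2) α] at h
    · exact MulAut.apply_inv_self Q (sHom π hπ h2 α) k

/-- Restriction of the induced automorphism of `Q` to `ker Φ`. -/
noncomputable def tAux (α : MulAut G) : MulAut ↥Φ.ker :=
  (MulEquiv.subgroupMap (sHom π hπ h2 α : Q ≃* Q) Φ.ker).trans
    (MulEquiv.subgroupCongr (sMapKer π hπ h2 Φ hΦ α))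

@[simp] theorem tAux_apply (α : MulAut G) (k : ↥Φ.ker) :
    ((tAux π hπ h2 Φ hΦ α k : ↥Φ.ker) : Q) = sHom π hπ h2 α k := rfl

noncomputable def tHom : MulAut G →* MulAut ↥Φ.ker :=
  MonoidHom.mk' (tAux π hπ h2 Φ hΦ) (by
    intro α β
    apply MulEquiv.ext
    intro k
    apply Subtype.ext
    show (sHom π hπ h2 (α * β)) (k : Q) = (sHom π hπ h2 α) (↑(tAux π hπ h2 Φ hΦ β k))
    rw [tAux_apply, map_mul]
    rfl)

@[simp] theorem tHom_apply (α : MulAut G) (k : ↥Φ.ker) :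
    ((tHom π hπ h2 Φ hΦ α k : ↥Φ.ker) : Q) = sHom π hπ h2 α k := rfl



omit hπ hΦ in
theorem mem_ker_of_rπ {α : MulAut G} (hr : rHom π h2 α = 1) :
    ∀ h ∈ π.ker, α h = h := by
  intro h hh
  have h3 := congrArg (fun e : MulAut ↥π.ker => ((e ⟨h, hh⟩ : ↥π.ker) : G)) hr
  simpa using h3

omit hΦ in
theorem proj_of_s_eq_one {α : MulAut G} (hs : sHom π hπ h2 α = 1) :
    ∀ g : G, π (α g) = π g := by
  intro g
  have h3 := congrArg (fun e : MulAut Q => e (π g)) hs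
  rw [← sHom_apply π hπ h2 α g]
  simpa using h3

omit hπ h2 hΦ in
theorem mem_ker_div (β : MulAut Q) (hβ : ∀ q : Q, Φ (β q) = Φ q) (q : Q) :
    q⁻¹ * β q ∈ Φ.ker := by
  rw [MonoidHom.mem_ker, map_mul, map_inv, hβ]
  group

/-- The subgroup of `Aut(ker π) × Aut Q` of pairs `(inner, β)` with `β` trivial on
`ker Φ` and on `Q / ker Φ`. -/
def WGrp : Subgroup (MulAut ↥π.ker × MulAut Q) where
  carrier := {p | p.1 ∈ (MulAut.conj : ↥π.ker →* MulAut ↥π.ker).range ∧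
      (∀ q : Q, Φ (p.2 q) = Φ q) ∧ ∀ k ∈ Φ.ker, p.2 k = k}
  one_mem' := ⟨one_mem _, fun _ => rfl, fun _ _ => rfl⟩
  mul_mem' := by
    rintro ⟨a1, a2⟩ ⟨b1, b2⟩ ⟨ha1, ha2, ha3⟩ ⟨hb1, hb2, hb3⟩
    refine ⟨mul_mem ha1 hb1, fun q => ?_, fun k hk => ?_⟩
    · show Φ (a2 (b2 q)) = Φ q
      rw [ha2, hb2]
    · show a2 (b2 k) = k
      rw [hb3 k hk, ha3 k hk]
  inv_mem' := by
    rintro ⟨a1, a2⟩ ⟨ha1, ha2, ha3⟩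
    refine ⟨inv_mem ha1, fun q => ?_, fun k hk => ?_⟩
    · show Φ (a2⁻¹ q) = Φ q
      conv_rhs => rw [← MulAut.apply_inv_self Q a2 q]
      rw [ha2]
    · show a2⁻¹ k = k
      apply MulEquiv.injective a2
      rw [MulAut.apply_inv_self Q a2 k, ha3 k hk]

omit hπ h2 hΦ in
theorem mem_WGrp_iff (p : MulAut ↥π.ker × MulAut Q) :
    p ∈ WGrp π Φ ↔ (p.1 ∈ (MulAut.conj : ↥π.ker →* MulAut ↥π.ker).range ∧
      (∀ q : Q, Φ (p.2 q) = Φ q) ∧ ∀ k ∈ Φ.ker, p.2 k = k) := Iff.rfl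

/-- Projection of `W` to the inner automorphisms of `ker π`. -/
def WProj : ↥(WGrp π Φ) →* ↥(MulAut.conj : ↥π.ker →* MulAut ↥π.ker).range :=
  MonoidHom.codRestrict ((MonoidHom.fst _ _).comp (WGrp π Φ).subtype) _
    (fun w => ((mem_WGrp_iff π Φ w.1).mp w.2).1)

omit hπ h2 hΦ in
theorem WGrp_solvable (h1 : IsSolvable ↥π.ker) : IsSolvable ↥(WGrp π Φ) := by
  haveI : Group.IsSolvable ↥π.ker := h1
  haveI : Group.IsSolvable ↥(MulAut.conj : ↥π.ker →* MulAut ↥π.ker).range :=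
    solvable_of_surjective (MulAut.conj : ↥π.ker →* MulAut ↥π.ker).rangeRestrict_surjective
  haveI : Group.IsSolvable ↥(WProj π Φ).ker := by
    apply isSolvable_of_comm
    intro a b
    apply Subtype.ext
    apply Subtype.ext
    have ha : a.1.1.1 = 1 := by
      have h3 := congrArg Subtype.val (MonoidHom.mem_ker.mp a.2)
      exact h3
    have hb : b.1.1.1 = 1 := by
      have h3 := congrArg Subtype.val (MonoidHom.mem_ker.mp b.2)
      exact h3
    have hamem := (mem_WGrp_iff π Φ a.1.1).mp a.1.2
    have hbmem := (mem_WGrp_iff π Φ b.1.1).mp b.1.2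
    show a.1.1 * b.1.1 = b.1.1 * a.1.1
    apply Prod.ext
    · show a.1.1.1 * b.1.1.1 = b.1.1.1 * a.1.1.1
      rw [ha, hb]
    · show a.1.1.2 * b.1.1.2 = b.1.1.2 * a.1.1.2
      apply MulEquiv.ext
      intro q
      exact comm_aux Φ.ker (MonoidHom.normal_ker Φ) a.1.1.2 b.1.1.2
        (mem_ker_div π Φ a.1.1.2 hamem.2.1) (mem_ker_div π Φ b.1.1.2 hbmem.2.1)
        hamem.2.2 hbmem.2.2 q
  exact solvable_of_ker_le_range (WProj π Φ).ker.subtype (WProj π Φ)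
    (by rw [Subgroup.range_subtype])

/-- The master homomorphism `Aut G →* N_{Out H}(Φ(Q)) × Aut(ker Φ)`. -/
noncomputable def ΨHom : MulAut G →* ↥(Subgroup.normalizer (Φ.range : Set (OutGroup ↥π.ker))) × MulAut ↥Φ.ker :=
  (MonoidHom.codRestrict ((toOut ↥π.ker).comp (rHom π h2)) (Subgroup.normalizer (Φ.range : Set (OutGroup ↥π.ker)))
    (fun α => memN π hπ h2 Φ hΦ α)).prod (tHom π hπ h2 Φ hΦ)

theorem mem_W_of_mem_kerΨ (α : MulAut G) (hα : ΨHom π hπ h2 Φ hΦ α = 1) :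
    (rHom π h2 α, sHom π hπ h2 α) ∈ WGrp π Φ := by
  obtain ⟨hα1, hα2⟩ := Prod.ext_iff.mp hα
  have h1 : toOut ↥π.ker (rHom π h2 α) = 1 := congrArg Subtype.val hα1
  refine (mem_WGrp_iff π Φ _).mpr ⟨?_, ?_, ?_⟩
  · have h5 : rHom π h2 α ∈
        (QuotientGroup.mk' ((MulAut.conj : ↥π.ker →* MulAut ↥π.ker).range)).ker := h1
    rwa [QuotientGroup.ker_mk'] at h5
  · intro q
    rw [starAux π hπ h2 Φ hΦ α q, h1]
    group
  · intro k hk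
    have h4 : sHom π hπ h2 α k = ((tHom π hπ h2 Φ hΦ α ⟨k, hk⟩ : ↥Φ.ker) : Q) :=
      (tHom_apply π hπ h2 Φ hΦ α ⟨k, hk⟩).symm
    have hα2' : tHom π hπ h2 Φ hΦ α = 1 := hα2
    rw [h4, hα2']
    rfl

noncomputable def ρW : ↥(ΨHom π hπ h2 Φ hΦ).ker →* ↥(WGrp π Φ) :=
  MonoidHom.codRestrict
    (((rHom π h2).prod (sHom π hπ h2)).comp (ΨHom π hπ h2 Φ hΦ).ker.subtype) _
    (fun a => mem_W_of_mem_kerΨ π hπ h2 Φ hΦ a.1 (MonoidHom.mem_ker.mp a.2))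

theorem kerΨ_solvable (h1 : IsSolvable ↥π.ker) :
    IsSolvable ↥(ΨHom π hπ h2 Φ hΦ).ker := by
  haveI : Group.IsSolvable ↥(WGrp π Φ) := WGrp_solvable π Φ h1
  haveI : Group.IsSolvable ↥(ρW π hπ h2 Φ hΦ).ker := by
    apply isSolvable_of_comm
    intro a b
    apply Subtype.ext
    apply Subtype.ext
    have ha : rHom π h2 a.1.1 = 1 ∧ sHom π hπ h2 a.1.1 = 1 :=
      Prod.ext_iff.mp (congrArg Subtype.val (MonoidHom.mem_ker.mp a.2))
    have hb : rHom π h2 b.1.1 = 1 ∧ sHom π hπ h2 b.1.1 = 1 :=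
      Prod.ext_iff.mp (congrArg Subtype.val (MonoidHom.mem_ker.mp b.2))
    show a.1.1 * b.1.1 = b.1.1 * a.1.1
    apply MulEquiv.ext
    intro x
    refine comm_aux π.ker (MonoidHom.normal_ker π) a.1.1 b.1.1 ?_ ?_
      (mem_ker_of_rπ π h2 ha.1) (mem_ker_of_rπ π h2 hb.1) x
    · intro x
      rw [MonoidHom.mem_ker, map_mul, map_inv, proj_of_s_eq_one π hπ h2 ha.2 x]
      group
    · intro x
      rw [MonoidHom.mem_ker, map_mul, map_inv, proj_of_s_eq_one π hπ h2 hb.2 x]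
      group
  exact solvable_of_ker_le_range (ρW π hπ h2 Φ hΦ).ker.subtype (ρW π hπ h2 Φ hΦ)
    (by rw [Subgroup.range_subtype])

end Stmt17Aux

/-- let `1 → H → G →^π Q → 1` (`H = ker π`) have outer action `Φ` and
suppose (1) `H` is solvable, (2) `H` is characteristic in `G`, (3) the normalizer of
`Φ(Q)` in `Out H` is solvable, and (4) `Aut(ker Φ)` is solvable.  Then `Aut G` is
solvable. -/
theorem stmt17 {G Q : Type*} [Group G] [Group Q]
    (π : G →* Q) (hπ : Function.Surjective π)
    (Φ : Q →* OutGroup ↥π.ker)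
    (hΦ : ∀ g : G, Φ (π g) = toOut ↥π.ker (MulAut.conjNormal g))
    (h1 : IsSolvable ↥π.ker)
    (h2 : π.ker.Characteristic)
    (h3 : IsSolvable ↥(Subgroup.normalizer (Φ.range : Set (OutGroup ↥π.ker))))
    (h4 : IsSolvable (MulAut ↥Φ.ker)) :
    IsSolvable (MulAut G) := by
  haveI : Group.IsSolvable ↥(Subgroup.normalizer (Φ.range : Set (OutGroup ↥π.ker))) := h3
  haveI : Group.IsSolvable (MulAut ↥Φ.ker) := h4
  haveI : Group.IsSolvable ↥(Stmt17Aux.ΨHom π hπ h2 Φ hΦ).ker := Stmt17Aux.kerΨ_solvable π hπ h2 Φ hΦ h1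
  exact solvable_of_ker_le_range (Stmt17Aux.ΨHom π hπ h2 Φ hΦ).ker.subtype
    (Stmt17Aux.ΨHom π hπ h2 Φ hΦ) (by rw [Subgroup.range_subtype])
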